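/- Let P : ℕ⁺ → ℕ be the tree function arising from a pure morphic sequence f^∞(a) over a finite alphabet Γ (the parent function of the morphic tree). Then P is rational: the tree on ℕ defined by P has only finitely many isomorphism classes of subtrees (at most |Γ| + 1 many). -/

import Mathlib

set_option linter.unusedSectionVars false


/-- Applying a morphism `f : Γ → Γ⁺` to an infinite sequence `σ`. -/
def seqFlat {Γ : Type*} (f : Γ → List Γ) (σ : ℕ → Γ) (n : ℕ) : Γ :=
  (((List.range (n + 1)).flatMap fun i => f (σ i)).getD n (σ 0))

/-- `treePR f σ n = (P (n+1), R (n+1))` for the morphic tree of `σ`. -/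
def treePR {Γ : Type*} (f : Γ → List Γ) (σ : ℕ → Γ) : ℕ → ℕ × ℕ
  | 0 => (0, 1)
  | n + 1 =>
      if (treePR f σ n).2 + 1 < (f (σ (treePR f σ n).1)).length then
        ((treePR f σ n).1, (treePR f σ n).2 + 1)
      else ((treePR f σ n).1 + 1, 0)

/-- The parent function `P : ℕ⁺ → ℕ` of the morphic tree. -/
def Pfun {Γ : Type*} (f : Γ → List Γ) (σ : ℕ → Γ) (n : ℕ) : ℕ := (treePR f σ (n - 1)).1

/-- `SP P n = { m | ∃ k, P^k(m) = n }`: the set of descendants of `n`. -/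
def SP (P : ℕ → ℕ) (n : ℕ) : Set ℕ := {m | ∃ k : ℕ, P^[k] m = n}

/-- The subtrees rooted at `m` and `n` are equal (as ordered trees). -/
def treeEquiv (P : ℕ → ℕ) (m n : ℕ) : Prop :=
  ∃ φ : ℕ → ℕ, Set.BijOn φ (SP P m) (SP P n) ∧ StrictMonoOn φ (SP P m) ∧
    φ m = n ∧ ∀ x ∈ SP P m, x ≠ m → φ (P x) = P (φ x)

namespace MorphicAux

variable {Γ : Type} (f : Γ → List Γ) (σ : ℕ → Γ)

/-- Partial sums of block lengths. -/
def Sfun : ℕ → ℕ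
  | 0 => 0
  | p + 1 => Sfun p + (f (σ p)).length

lemma treePR_fst_le (n : ℕ) : (treePR f σ n).1 ≤ n := by
  induction n with
  | zero => simp [treePR]
  | succ n ih =>
      rw [treePR]
      split <;> simp <;> omega

lemma Pfun_zero : Pfun f σ 0 = 0 := by simp [Pfun, treePR]

lemma Pfun_lt {x : ℕ} (hx : 1 ≤ x) : Pfun f σ x < x :=
  lt_of_le_of_lt (treePR_fst_le f σ (x-1)) (by omega)

lemma Pfun_le (x : ℕ) : Pfun f σ x ≤ x := by
  rcases Nat.eq_zero_or_pos x with h | h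
  · simp [h, Pfun_zero]
  · exact (Pfun_lt f σ h).le

lemma iterate_le (k x : ℕ) : (Pfun f σ)^[k] x ≤ x := by
  induction k with
  | zero => simp
  | succ k ih =>
      rw [Function.iterate_succ_apply']
      exact le_trans (Pfun_le f σ _) ih

lemma iterate_zero_fix (k : ℕ) : (Pfun f σ)^[k] 0 = 0 := by
  induction k with
  | zero => simp
  | succ k ih => rw [Function.iterate_succ_apply, Pfun_zero, ih]

lemma no_cycle {m k : ℕ} (hm : 1 ≤ m) (hk : 1 ≤ k) : (Pfun f σ)^[k] m ≠ m := by
  obtain ⟨k, rfl⟩ : ∃ j, k = j + 1 := ⟨k - 1, by omega⟩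
  rw [Function.iterate_succ_apply]
  exact fun h => absurd (h ▸ iterate_le f σ k (Pfun f σ m)) (by simpa using Pfun_lt f σ hm)

lemma SP_ge {m x : ℕ} (h : x ∈ SP (Pfun f σ) m) : m ≤ x := by
  obtain ⟨k, hk⟩ := h
  exact hk ▸ iterate_le f σ k x

section withHyp
variable (hL1 : ∀ p, 0 < (f (σ p)).length) (hL0 : 1 < (f (σ 0)).length)
include hL1 hL0

lemma S_strictMono : StrictMono (Sfun f σ) := by
  apply strictMono_nat_of_lt_succ
  intro n
  have := hL1 n
  simp [Sfun]; omega

lemma S_ge (p : ℕ) : p ≤ Sfun f σ p := by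
  induction p with
  | zero => simp [Sfun]
  | succ p ih => have := hL1 p; simp [Sfun]; omega

lemma S_ge' {p : ℕ} (hp : 1 ≤ p) : p + 1 ≤ Sfun f σ p := by
  induction p with
  | zero => omega
  | succ p ih =>
      rcases Nat.eq_zero_or_pos p with h | h
      · subst h; simp [Sfun]; omega
      · have := hL1 p; have := ih h; simp [Sfun] at *; omega

lemma treePR_spec (n : ℕ) :
    n + 1 = Sfun f σ (treePR f σ n).1 + (treePR f σ n).2 ∧
      (treePR f σ n).2 < (f (σ (treePR f σ n).1)).length := by
  induction n with
  | zero => simpa [treePR, Sfun] using hL0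
  | succ n ih =>
      rw [treePR]
      split
      · constructor
        · simp; omega
        · simpa using by assumption
      · rename_i h
        have h2 : (treePR f σ n).2 + 1 = (f (σ (treePR f σ n).1)).length := by omega
        constructor
        · simp [Sfun]; omega
        · simpa using hL1 _

lemma Pfun_spec {x : ℕ} (hx : 1 ≤ x) :
    Sfun f σ (Pfun f σ x) ≤ x ∧ x < Sfun f σ (Pfun f σ x + 1) := by
  have h := treePR_spec f σ hL1 hL0 (x - 1)
  have hx1 : x - 1 + 1 = x := by omega
  rw [hx1] at h
  unfold Pfun
  constructor
  · omega
  · show x < Sfun f σ _ + _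
    omega

lemma Pfun_eq {p x : ℕ} (hx : 1 ≤ x) (h1 : Sfun f σ p ≤ x) (h2 : x < Sfun f σ (p + 1)) :
    Pfun f σ x = p := by
  have h := Pfun_spec f σ hL1 hL0 hx
  by_contra hne
  have hmono := (S_strictMono f σ hL1 hL0).monotone
  rcases lt_or_gt_of_ne hne with hlt | hlt
  · exact absurd (le_trans (hmono (show Pfun f σ x + 1 ≤ p from hlt)) h1) (by omega)
  · exact absurd (le_trans (hmono (show p + 1 ≤ Pfun f σ x from hlt)) h.1) (by omega)

end withHyp
end MorphicAux

namespace MorphicAux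
variable {Γ : Type} (f : Γ → List Γ) (σ : ℕ → Γ)
variable (hL1 : ∀ p, 0 < (f (σ p)).length) (hL0 : 1 < (f (σ 0)).length)
include hL1 hL0

lemma P_mono {x y : ℕ} (hxy : x ≤ y) : Pfun f σ x ≤ Pfun f σ y := by
  rcases Nat.eq_zero_or_pos x with h | h
  · simp [h, Pfun_zero]
  · have hx := Pfun_spec f σ hL1 hL0 h
    have hy := Pfun_spec f σ hL1 hL0 (le_trans h hxy)
    by_contra hc
    push_neg at hc
    have := (S_strictMono f σ hL1 hL0).monotone (show Pfun f σ y + 1 ≤ Pfun f σ x from hc)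
    omega

omit hL0 in
lemma length_bind (N : ℕ) : ((List.range N).flatMap fun i => f (σ i)).length = Sfun f σ N := by
  induction N with
  | zero => simp [Sfun]
  | succ N ih => rw [List.range_succ, List.flatMap_append]; simp [Sfun, ih]

lemma sigma_eq (hσ : seqFlat f σ = σ) {p j : ℕ} (hj : j < (f (σ p)).length) :
    σ (Sfun f σ p + j) = (f (σ p)).getD j (σ 0) := by
  set x := Sfun f σ p + j with hx
  have hSp : p ≤ Sfun f σ p := S_ge f σ hL1 hL0 p
  have hpx : p ≤ x := by omega
  have hsplit : List.range (x + 1)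
      = List.range (p + 1) ++ (List.range (x - p)).map (fun i => (p + 1) + i) := by
    rw [← List.range_add]; congr 1; omega
  have hxval : σ x = ((List.range (x + 1)).flatMap fun i => f (σ i)).getD x (σ 0) := by
    have := (congrFun hσ x).symm
    simp only [seqFlat] at this ⊢
    exact this
  rw [hsplit, List.flatMap_append] at hxval
  have hlenA : ((List.range (p + 1)).flatMap fun i => f (σ i)).length
      = Sfun f σ p + (f (σ p)).length := by
    rw [length_bind f σ hL1]; simp [Sfun]
  rw [List.getD_append _ _ _ _ (by omega)] at hxval
  rw [List.range_succ, List.flatMap_append] at hxval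
  rw [List.getD_append_right _ _ _ _ (by rw [length_bind f σ hL1]; omega)] at hxval
  rw [length_bind f σ hL1] at hxval
  have hje : x - Sfun f σ p = j := by omega
  rw [hje] at hxval
  simpa using hxval

end MorphicAux

namespace MorphicAux
variable {Γ : Type} (f : Γ → List Γ) (σ : ℕ → Γ)

/-- Transport of the subtree at `m` onto the subtree at `n`. -/
def tmap (m n x : ℕ) : ℕ :=
  if x = 0 then 0
  else if x = m then n
  else Sfun f σ (tmap m n (Pfun f σ x)) + (x - Sfun f σ (Pfun f σ x))
termination_by x
decreasing_by exact Pfun_lt f σ (by omega)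

lemma tmap_m {m : ℕ} (n : ℕ) (hm : m ≠ 0) : tmap f σ m n m = n := by
  rw [tmap]; simp [hm]

lemma tmap_ne {m n x : ℕ} (hx0 : x ≠ 0) (hxm : x ≠ m) :
    tmap f σ m n x
      = Sfun f σ (tmap f σ m n (Pfun f σ x)) + (x - Sfun f σ (Pfun f σ x)) := by
  rw [tmap]; simp [hx0, hxm]

lemma iterate_mono (hL1 : ∀ p, 0 < (f (σ p)).length) (hL0 : 1 < (f (σ 0)).length)
    (j : ℕ) {x y : ℕ} (hxy : x ≤ y) : (Pfun f σ)^[j] x ≤ (Pfun f σ)^[j] y := by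
  induction j generalizing x y with
  | zero => simpa
  | succ j ih =>
      rw [Function.iterate_succ_apply, Function.iterate_succ_apply]
      exact ih (P_mono f σ hL1 hL0 hxy)

lemma lemG (hL1 : ∀ p, 0 < (f (σ p)).length) (hL0 : 1 < (f (σ 0)).length)
    {m x y k k' : ℕ} (hm : 1 ≤ m) (hxy : x ≤ y)
    (hx : (Pfun f σ)^[k] x = m) (hy : (Pfun f σ)^[k'] y = m) (hkk : k' < k) : False := by
  have hz : (Pfun f σ)^[k'] x ≤ m := hy ▸ iterate_mono f σ hL1 hL0 k' hxy
  have hsplit : (Pfun f σ)^[k] x = (Pfun f σ)^[k - k'] ((Pfun f σ)^[k'] x) := by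
    rw [← Function.iterate_add_apply]; congr 1; omega
  have hge : m ≤ (Pfun f σ)^[k'] x := by
    rw [hx] at hsplit
    exact hsplit ▸ iterate_le f σ (k - k') _
  have hzm : (Pfun f σ)^[k'] x = m := le_antisymm hz hge
  rw [hx, hzm] at hsplit
  exact no_cycle f σ hm (by omega) hsplit.symm

section trans
variable (hL1 : ∀ p, 0 < (f (σ p)).length) (hL0 : 1 < (f (σ 0)).length)
  (hσ : seqFlat f σ = σ)
include hL1 hL0 hσ

lemma transport {m n : ℕ} (hm : 1 ≤ m) (hn : 1 ≤ n) (hmn : σ m = σ n) :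
    ∀ k x, (Pfun f σ)^[k] x = m →
      σ (tmap f σ m n x) = σ x ∧ (Pfun f σ)^[k] (tmap f σ m n x) = n ∧
      tmap f σ n m (tmap f σ m n x) = x ∧ 1 ≤ tmap f σ m n x ∧
      (x ≠ m → Pfun f σ (tmap f σ m n x) = tmap f σ m n (Pfun f σ x)) := by
  intro k
  induction k with
  | zero =>
      intro x hx
      simp only [Function.iterate_zero_apply] at hx
      rw [hx, tmap_m f σ n (by omega), tmap_m f σ m (by omega)]
      exact ⟨hmn.symm, by simp, rfl, hn, fun h => absurd rfl h⟩
  | succ k ih =>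
      intro x hx
      rw [Function.iterate_succ_apply] at hx
      have hx0 : x ≠ 0 := by
        rintro rfl
        rw [Pfun_zero, iterate_zero_fix] at hx
        omega
      have hxm : x ≠ m := by
        rintro rfl
        exact no_cycle f σ hm (Nat.succ_le_succ (Nat.zero_le k))
          (by rw [Function.iterate_succ_apply]; exact hx)
      set p := Pfun f σ x with hp
      obtain ⟨hq1, hq2, hq3, hq4, _⟩ := ih p hx
      set q := tmap f σ m n p with hqdef
      have hspec := Pfun_spec f σ hL1 hL0 (by omega : 1 ≤ x)
      rw [← hp] at hspec
      have hSp1 : Sfun f σ (p + 1) = Sfun f σ p + (f (σ p)).length := by simp [Sfun]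
      set j := x - Sfun f σ p with hj
      have hjlt : j < (f (σ p)).length := by omega
      have hLq : (f (σ q)).length = (f (σ p)).length := by rw [hq1]
      have htx : tmap f σ m n x = Sfun f σ q + j := by
        rw [tmap_ne f σ hx0 hxm, ← hp]
      have hSq : q + 1 ≤ Sfun f σ q := S_ge' f σ hL1 hL0 hq4
      have hφ1 : 1 ≤ Sfun f σ q + j := by omega
      have hSq1 : Sfun f σ (q + 1) = Sfun f σ q + (f (σ q)).length := by simp [Sfun]
      have hPφ : Pfun f σ (Sfun f σ q + j) = q :=
        Pfun_eq f σ hL1 hL0 hφ1 (Nat.le_add_right _ _) (by omega)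
      have hxsj : x = Sfun f σ p + j := by omega
      have hlab : σ (Sfun f σ q + j) = σ x := by
        rw [sigma_eq f σ hL1 hL0 hσ (by omega : j < (f (σ q)).length), hq1,
          ← sigma_eq f σ hL1 hL0 hσ hjlt, ← hxsj]
      have hnq : n ≤ q := hq2 ▸ iterate_le f σ k q
      have hφn : Sfun f σ q + j ≠ n := by
        intro hc
        have : Pfun f σ n = q := hc ▸ hPφ
        have := Pfun_lt f σ hn
        omega
      refine ⟨htx ▸ hlab, ?_, ?_, by omega, ?_⟩
      · rw [htx, Function.iterate_succ_apply, hPφ, hq2]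
      · rw [htx, tmap_ne f σ (by omega) hφn, hPφ, hq3]
        omega
      · intro _
        rw [htx, hPφ]

lemma transport_mono {m n : ℕ} (hm : 1 ≤ m) (hn : 1 ≤ n) (hmn : σ m = σ n) :
    ∀ k x y, (Pfun f σ)^[k] x = m → (Pfun f σ)^[k] y = m → x < y →
      tmap f σ m n x < tmap f σ m n y := by
  intro k
  induction k with
  | zero =>
      intro x y hx hy hxy
      simp only [Function.iterate_zero_apply] at hx hy
      omega
  | succ k ih =>
      intro x y hx hy hxy
      rw [Function.iterate_succ_apply] at hx hy
      have hx0 : x ≠ 0 := by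
        rintro rfl; rw [Pfun_zero, iterate_zero_fix] at hx; omega
      have hy0 : y ≠ 0 := by
        rintro rfl; rw [Pfun_zero, iterate_zero_fix] at hy; omega
      have hxm : x ≠ m := by
        rintro rfl
        exact no_cycle f σ hm (Nat.succ_le_succ (Nat.zero_le k))
          (by rw [Function.iterate_succ_apply]; exact hx)
      have hym : y ≠ m := by
        rintro rfl
        exact no_cycle f σ hm (Nat.succ_le_succ (Nat.zero_le k))
          (by rw [Function.iterate_succ_apply]; exact hy)
      set p := Pfun f σ x with hp
      set p' := Pfun f σ y with hp'
      have hpp' : p ≤ p' := P_mono f σ hL1 hL0 hxy.le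
      obtain ⟨hq1, hq2, hq3, hq4, _⟩ := transport f σ hL1 hL0 hσ hm hn hmn k p hx
      obtain ⟨hq1', hq2', hq3', hq4', _⟩ := transport f σ hL1 hL0 hσ hm hn hmn k p' hy
      set q := tmap f σ m n p with hq
      set q' := tmap f σ m n p' with hq'
      have hspec := Pfun_spec f σ hL1 hL0 (by omega : 1 ≤ x)
      have hspec' := Pfun_spec f σ hL1 hL0 (by omega : 1 ≤ y)
      rw [← hp] at hspec
      rw [← hp'] at hspec'
      have hSp1 : Sfun f σ (p + 1) = Sfun f σ p + (f (σ p)).length := by simp [Sfun]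
      have hSp1' : Sfun f σ (p' + 1) = Sfun f σ p' + (f (σ p')).length := by simp [Sfun]
      rw [tmap_ne f σ hx0 hxm, tmap_ne f σ hy0 hym, ← hp, ← hp', ← hq, ← hq']
      rcases eq_or_lt_of_le hpp' with heq | hlt
      · have hqq : q = q' := by rw [hq, hq', heq]
        have e1 : Sfun f σ q = Sfun f σ q' := by rw [hqq]
        have e2 : Sfun f σ p = Sfun f σ p' := by rw [heq]
        omega
      · have hqq' : q < q' := ih p p' hx hy hlt
        have hSq1 : Sfun f σ (q + 1) = Sfun f σ q + (f (σ q)).length := by simp [Sfun]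
        have hLq : (f (σ q)).length = (f (σ p)).length := by rw [hq1]
        have hSmono := (S_strictMono f σ hL1 hL0).monotone (show q + 1 ≤ q' from hqq')
        omega

end trans
end MorphicAux

namespace MorphicAux
variable {Γ : Type} (f : Γ → List Γ) (σ : ℕ → Γ)

lemma treeEquiv_refl (P : ℕ → ℕ) (x : ℕ) : treeEquiv P x x :=
  ⟨id, Set.bijOn_id _, fun _ _ _ _ h => h, rfl, fun _ _ _ => rfl⟩

lemma treeEquiv_of_label (hL1 : ∀ p, 0 < (f (σ p)).length) (hL0 : 1 < (f (σ 0)).length)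
    (hσ : seqFlat f σ = σ) {m n : ℕ} (hm : 1 ≤ m) (hn : 1 ≤ n) (hmn : σ m = σ n) :
    treeEquiv (Pfun f σ) m n := by
  refine ⟨tmap f σ m n, ⟨?_, ?_, ?_⟩, ?_, ?_, ?_⟩
  · -- MapsTo
    rintro x ⟨k, hk⟩
    exact ⟨k, (transport f σ hL1 hL0 hσ hm hn hmn k x hk).2.1⟩
  · -- InjOn
    rintro x ⟨k, hk⟩ y ⟨k', hk'⟩ hxy
    have h1 := (transport f σ hL1 hL0 hσ hm hn hmn k x hk).2.2.1
    have h2 := (transport f σ hL1 hL0 hσ hm hn hmn k' y hk').2.2.1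
    rw [← h1, ← h2, hxy]
  · -- SurjOn
    rintro y ⟨k, hk⟩
    obtain ⟨h1, h2, h3, h4, h5⟩ := transport f σ hL1 hL0 hσ hn hm hmn.symm k y hk
    exact ⟨tmap f σ n m y, ⟨k, h2⟩, h3⟩
  · -- StrictMonoOn
    rintro x ⟨k, hk⟩ y ⟨k', hk'⟩ hxy
    have hkk' : k ≤ k' := by
      by_contra hc
      exact lemG f σ hL1 hL0 hm hxy.le hk hk' (by omega)
    rcases eq_or_lt_of_le hkk' with heq | hlt
    · exact transport_mono f σ hL1 hL0 hσ hm hn hmn k x y hk (heq ▸ hk') hxy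
    · have hx := (transport f σ hL1 hL0 hσ hm hn hmn k x hk).2.1
      have hy := (transport f σ hL1 hL0 hσ hm hn hmn k' y hk').2.1
      by_contra hc
      push_neg at hc
      exact lemG f σ hL1 hL0 hn hc hy hx hlt
  · exact tmap_m f σ n (by omega)
  · rintro x ⟨k, hk⟩ hxm
    exact ((transport f σ hL1 hL0 hσ hm hn hmn k x hk).2.2.2.2 hxm).symm

end MorphicAux


/-- The tree function of a pure morphic sequence `f^∞(a)` is rational: its tree has
at most `|Γ| + 1` distinct subtrees. -/
theorem morphic_tree_function_rational {Γ : Type} [Fintype Γ] (f : Γ → List Γ) (a : Γ)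
    (u : List Γ) (hne : ∀ b : Γ, f b ≠ []) (hu : u ≠ []) (hfa : f a = a :: u)
    (σ : ℕ → Γ) (hσ0 : σ 0 = a) (hfix : seqFlat f σ = σ) :
    ∃ F : Finset ℕ, F.card ≤ Fintype.card Γ + 1 ∧
      ∀ n : ℕ, ∃ m ∈ F, treeEquiv (Pfun f σ) m n := by
  classical
  have hL1 : ∀ p, 0 < (f (σ p)).length := fun p => List.length_pos_iff.2 (hne _)
  have hL0 : 1 < (f (σ 0)).length := by
    rw [hσ0, hfa]
    have : 0 < u.length := List.length_pos_iff.2 hu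
    simp
    omega
  set g : Γ → ℕ := fun b => if h : ∃ m, 1 ≤ m ∧ σ m = b then h.choose else 0 with hg
  refine ⟨insert 0 (Finset.image g Finset.univ), ?_, ?_⟩
  · calc (insert 0 (Finset.image g Finset.univ)).card
        ≤ (Finset.image g Finset.univ).card + 1 := Finset.card_insert_le _ _
      _ ≤ Fintype.card Γ + 1 := by
          have := Finset.card_image_le (s := (Finset.univ : Finset Γ)) (f := g)
          simpa using Nat.add_le_add_right (by simpa using this) 1
  · intro n
    rcases Nat.eq_zero_or_pos n with rfl | hn
    · exact ⟨0, Finset.mem_insert_self _ _, MorphicAux.treeEquiv_refl _ _⟩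
    · have hex : ∃ m, 1 ≤ m ∧ σ m = σ n := ⟨n, hn, rfl⟩
      refine ⟨g (σ n), Finset.mem_insert_of_mem (Finset.mem_image_of_mem g (Finset.mem_univ _)), ?_⟩
      have hgn : g (σ n) = hex.choose := by rw [hg]; simp [dif_pos hex]
      obtain ⟨h1, h2⟩ := hex.choose_spec
      rw [hgn]
      exact MorphicAux.treeEquiv_of_label f σ hL1 hL0 hfix h1 hn h2
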